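/- The q-expansion identity Δ = (E₄³ − E₆²)/1728 holds in ℤ[[q]]: q·∏_{m=1}^∞ (1−q^m)^{24} = ((1 + 240∑_{n≥1}σ₃(n)q^n)³ − (1 − 504∑_{n≥1}σ₅(n)q^n)²)/1728. -/

import Mathlib

open PowerSeries Finset

/-- Normalized Eisenstein series of weight 4, as a formal q-expansion in ℚ[[q]]. -/
noncomputable def EisensteinE4 : PowerSeries ℚ :=
  PowerSeries.mk fun n => if n = 0 then 1 else 240 * ∑ d ∈ n.divisors, (d : ℚ) ^ 3

/-- Normalized Eisenstein series of weight 6, as a formal q-expansion in ℚ[[q]]. -/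
noncomputable def EisensteinE6 : PowerSeries ℚ :=
  PowerSeries.mk fun n => if n = 0 then 1 else -504 * ∑ d ∈ n.divisors, (d : ℚ) ^ 5

namespace DeltaAux


/-- divisor power sum, rational valued -/
def sg (r m : ℕ) : ℚ := ∑ d ∈ m.divisors, (d : ℚ) ^ r

/-- solutions of a*x + b*y = n with all entries ≥ 1 -/
def Qs (n : ℕ) : Finset ((ℕ × ℕ) × (ℕ × ℕ)) :=
  ((Icc 1 n ×ˢ Icc 1 n) ×ˢ (Icc 1 n ×ˢ Icc 1 n)).filter
    (fun t => t.1.1 * t.1.2 + t.2.1 * t.2.2 = n)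

lemma mem_Qs {n : ℕ} {t : (ℕ × ℕ) × (ℕ × ℕ)} :
    t ∈ Qs n ↔ 1 ≤ t.1.1 ∧ 1 ≤ t.1.2 ∧ 1 ≤ t.2.1 ∧ 1 ≤ t.2.2 ∧
      t.1.1 * t.1.2 + t.2.1 * t.2.2 = n := by
  obtain ⟨⟨a, x⟩, b, y⟩ := t
  simp only [Qs, mem_filter, mem_product, mem_Icc]
  constructor
  · rintro ⟨⟨⟨⟨ha, -⟩, ⟨hx, -⟩⟩, ⟨⟨hb, -⟩, ⟨hy, -⟩⟩⟩, h⟩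
    exact ⟨ha, hx, hb, hy, h⟩
  · rintro ⟨ha, hx, hb, hy, h⟩
    refine ⟨⟨⟨⟨ha, ?_⟩, hx, ?_⟩, ⟨hb, ?_⟩, hy, ?_⟩, h⟩ <;> nlinarith


/-- full sum of w(a,b) over Qs -/
def Sf (n : ℕ) (w : ℕ → ℕ → ℚ) : ℚ := ∑ t ∈ Qs n, w t.1.1 t.2.1
/-- region a > b -/
def Sab (n : ℕ) (w : ℕ → ℕ → ℚ) : ℚ :=
  ∑ t ∈ (Qs n).filter (fun t => t.2.1 < t.1.1), w t.1.1 t.2.1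
/-- region a < b -/
def Sba (n : ℕ) (w : ℕ → ℕ → ℚ) : ℚ :=
  ∑ t ∈ (Qs n).filter (fun t => t.1.1 < t.2.1), w t.1.1 t.2.1
/-- region a = b -/
def Saa (n : ℕ) (w : ℕ → ℕ → ℚ) : ℚ :=
  ∑ t ∈ (Qs n).filter (fun t => t.1.1 = t.2.1), w t.1.1 t.2.1
/-- region x < y -/
def Syx (n : ℕ) (w : ℕ → ℕ → ℚ) : ℚ :=
  ∑ t ∈ (Qs n).filter (fun t => t.1.2 < t.2.2), w t.1.1 t.2.1
/-- region x > y -/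
def Sxy (n : ℕ) (w : ℕ → ℕ → ℚ) : ℚ :=
  ∑ t ∈ (Qs n).filter (fun t => t.2.2 < t.1.2), w t.1.1 t.2.1
/-- region x = y -/
def Sxx (n : ℕ) (w : ℕ → ℕ → ℚ) : ℚ :=
  ∑ t ∈ (Qs n).filter (fun t => t.1.2 = t.2.2), w t.1.1 t.2.1

lemma split_ab (n : ℕ) (w : ℕ → ℕ → ℚ) : Sf n w = Sab n w + Sba n w + Saa n w := by
  classical
  rw [Sf, ← sum_filter_add_sum_filter_not (Qs n) (fun t => t.2.1 < t.1.1),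
    ← sum_filter_add_sum_filter_not ((Qs n).filter (fun t => ¬ t.2.1 < t.1.1))
      (fun t => t.1.1 < t.2.1), filter_filter, filter_filter]
  rw [Sab, Sba, Saa]
  have h1 : ((Qs n).filter fun t => ¬t.2.1 < t.1.1 ∧ t.1.1 < t.2.1) =
      (Qs n).filter (fun t => t.1.1 < t.2.1) := by
    apply filter_congr; intro t _; constructor
    · exact fun h => h.2
    · exact fun h => ⟨by omega, h⟩
  have h2 : ((Qs n).filter fun t => ¬t.2.1 < t.1.1 ∧ ¬t.1.1 < t.2.1) =
      (Qs n).filter (fun t => t.1.1 = t.2.1) := by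
    apply filter_congr; intro t _; constructor
    · exact fun h => by omega
    · exact fun h => by omega
  rw [h1, h2]; ring

lemma split_xy (n : ℕ) (w : ℕ → ℕ → ℚ) : Sf n w = Syx n w + Sxy n w + Sxx n w := by
  classical
  rw [Sf, ← sum_filter_add_sum_filter_not (Qs n) (fun t => t.1.2 < t.2.2),
    ← sum_filter_add_sum_filter_not ((Qs n).filter (fun t => ¬ t.1.2 < t.2.2))
      (fun t => t.2.2 < t.1.2), filter_filter, filter_filter]
  rw [Syx, Sxy, Sxx]
  have h1 : ((Qs n).filter fun t => ¬t.1.2 < t.2.2 ∧ t.2.2 < t.1.2) =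
      (Qs n).filter (fun t => t.2.2 < t.1.2) := by
    apply filter_congr; intro t _; constructor
    · exact fun h => h.2
    · exact fun h => ⟨by omega, h⟩
  have h2 : ((Qs n).filter fun t => ¬t.1.2 < t.2.2 ∧ ¬t.2.2 < t.1.2) =
      (Qs n).filter (fun t => t.1.2 = t.2.2) := by
    apply filter_congr; intro t _; constructor
    · exact fun h => by omega
    · exact fun h => by omega
  rw [h1, h2]; ring

/-- swap bijection on restricted regions -/
lemma swap_ba (n : ℕ) (w : ℕ → ℕ → ℚ) : Sba n w = Sab n (fun a b => w b a) := by
  refine Finset.sum_nbij' (fun t => (t.2, t.1)) (fun t => (t.2, t.1)) ?_ ?_ ?_ ?_ ?_ <;>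
    intro t ht
  · simp only [mem_filter, mem_Qs] at *
    obtain ⟨⟨ha, hx, hb, hy, h⟩, hlt⟩ := ht
    exact ⟨⟨hb, hy, ha, hx, by omega⟩, hlt⟩
  · simp only [mem_filter, mem_Qs] at *
    obtain ⟨⟨ha, hx, hb, hy, h⟩, hlt⟩ := ht
    exact ⟨⟨hb, hy, ha, hx, by omega⟩, hlt⟩
  · rfl
  · rfl
  · rfl

lemma swap_xy (n : ℕ) (w : ℕ → ℕ → ℚ) : Sxy n w = Syx n (fun a b => w b a) := by
  refine Finset.sum_nbij' (fun t => (t.2, t.1)) (fun t => (t.2, t.1)) ?_ ?_ ?_ ?_ ?_ <;>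
    intro t ht
  · simp only [mem_filter, mem_Qs] at *
    obtain ⟨⟨ha, hx, hb, hy, h⟩, hlt⟩ := ht
    exact ⟨⟨hb, hy, ha, hx, by omega⟩, hlt⟩
  · simp only [mem_filter, mem_Qs] at *
    obtain ⟨⟨ha, hx, hb, hy, h⟩, hlt⟩ := ht
    exact ⟨⟨hb, hy, ha, hx, by omega⟩, hlt⟩
  · rfl
  · rfl
  · rfl

/-- key telescoping bijection -/
lemma phi (n : ℕ) (w : ℕ → ℕ → ℚ) : Sab n w = Syx n (fun a b => w (a + b) b) := by
  refine Finset.sum_nbij' (fun t => ((t.1.1 - t.2.1, t.1.2), (t.2.1, t.2.2 + t.1.2)))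
    (fun t => ((t.1.1 + t.2.1, t.1.2), (t.2.1, t.2.2 - t.1.2))) ?_ ?_ ?_ ?_ ?_ <;>
    intro t ht <;> obtain ⟨⟨a, x⟩, b, y⟩ := t <;>
    simp only [mem_filter, mem_Qs] at *
  · obtain ⟨⟨ha, hx, hb, hy, h⟩, hlt⟩ := ht
    refine ⟨⟨by omega, hx, hb, by omega, ?_⟩, by omega⟩
    have e1 : (a - b) * x + b * x = a * x := by
      rw [← Nat.add_mul]; congr 1; omega
    have e2 : b * (y + x) = b * y + b * x := Nat.mul_add b y x
    omega
  · obtain ⟨⟨ha, hx, hb, hy, h⟩, hlt⟩ := ht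
    refine ⟨⟨by omega, hx, hb, by omega, ?_⟩, by omega⟩
    have e1 : (a + b) * x = a * x + b * x := Nat.add_mul a b x
    have e2 : b * (y - x) + b * x = b * y := by
      rw [← Nat.mul_add]; congr 1; omega
    omega
  · obtain ⟨⟨ha, hx, hb, hy, h⟩, hlt⟩ := ht
    simp only [Prod.mk.injEq]
    refine ⟨⟨by omega, trivial⟩, trivial, by omega⟩
  · obtain ⟨⟨ha, hx, hb, hy, h⟩, hlt⟩ := ht
    simp only [Prod.mk.injEq]
    refine ⟨⟨by omega, trivial⟩, trivial, by omega⟩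
  · obtain ⟨⟨ha, hx, hb, hy, h⟩, hlt⟩ := ht
    have e : a - b + b = a := by omega
    simp only [e]


lemma master (n : ℕ) (w : ℕ → ℕ → ℚ) :
    Syx n (fun a b => w (a + b) b) + Syx n (fun a b => w b (a + b)) + Saa n w
      = Syx n w + Syx n (fun a b => w b a) + Sxx n w := by
  have h1 := split_ab n w
  have h2 := split_xy n w
  have h3 := phi n w
  have h4 : Sba n w = Syx n (fun a b => w b (a + b)) := by
    rw [swap_ba, phi n (fun a b => w b a)]
  have h5 := swap_xy n w
  linarith

lemma Saa_eval (n : ℕ) (w : ℕ → ℕ → ℚ) :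
    Saa n w = ∑ d ∈ n.divisors, (((n / d : ℕ) : ℚ) - 1) * w d d := by
  have key : Saa n w = ∑ p ∈ (n.divisors.sigma fun d => Ico 1 (n / d)), w p.1 p.1 := by
    rw [Saa]
    refine (Finset.sum_nbij' (fun p => ((p.1, p.2), (p.1, n / p.1 - p.2)))
      (fun t => ⟨t.1.1, t.1.2⟩) ?_ ?_ ?_ ?_ ?_).symm <;> intro p hp
    · obtain ⟨d, x⟩ := p
      simp only [Finset.mem_sigma, Nat.mem_divisors, mem_Ico] at hp
      obtain ⟨⟨hdvd, hn0⟩, hx1, hx2⟩ := hp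
      simp only [mem_filter, mem_Qs]
      have hd0 : 0 < d := Nat.pos_of_dvd_of_pos hdvd (Nat.pos_of_ne_zero hn0)
      have e1 : x + (n / d - x) = n / d := by omega
      have e2 : d * x + d * (n / d - x) = d * (n / d) := by rw [← Nat.mul_add, e1]
      have e3 : d * (n / d) = n := Nat.mul_div_cancel' hdvd
      exact ⟨⟨hd0, hx1, hd0, by omega, by omega⟩, trivial⟩
    · obtain ⟨⟨a, x⟩, b, y⟩ := p
      simp only [mem_filter, mem_Qs] at hp
      obtain ⟨⟨ha, hx, hb, hy, h⟩, heq⟩ := hp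
      simp only at heq h ha hx hb hy ⊢
      subst heq
      simp only [Finset.mem_sigma, Nat.mem_divisors, mem_Ico]
      have hdvd : a ∣ n := ⟨x + y, by rw [Nat.mul_add]; omega⟩
      have h2 : a * (x + y) = n := by rw [Nat.mul_add]; omega
      have hnd : n / a = x + y := Nat.div_eq_of_eq_mul_right (by omega) h2.symm
      have hax : 0 < a * x := Nat.mul_pos ha hx
      have hay : 0 < a * y := Nat.mul_pos ha hy
      refine ⟨⟨hdvd, by omega⟩, hx, by omega⟩
    · obtain ⟨d, x⟩ := p
      rfl
    · obtain ⟨⟨a, x⟩, b, y⟩ := p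
      simp only [mem_filter, mem_Qs] at hp
      obtain ⟨⟨ha, hx, hb, hy, h⟩, heq⟩ := hp
      simp only at heq h ha hx hb hy ⊢
      subst heq
      have h2 : a * (x + y) = n := by rw [Nat.mul_add]; omega
      have hnd : n / a = x + y := Nat.div_eq_of_eq_mul_right (by omega) h2.symm
      have e : n / a - x = y := by omega
      rw [e]
    · obtain ⟨d, x⟩ := p
      rfl
  rw [key, Finset.sum_sigma]
  refine Finset.sum_congr rfl fun d hd => ?_
  simp only [Nat.mem_divisors] at hd
  have hdpos : 0 < d := Nat.pos_of_dvd_of_pos hd.1 (Nat.pos_of_ne_zero hd.2)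
  have hd1 : 1 ≤ n / d := (Nat.one_le_div_iff hdpos).mpr (Nat.le_of_dvd (Nat.pos_of_ne_zero hd.2) hd.1)
  simp only [Finset.sum_const, Nat.card_Ico, nsmul_eq_mul]
  push_cast [Nat.cast_sub hd1]
  ring

lemma Sxx_eval (n : ℕ) (w : ℕ → ℕ → ℚ) :
    Sxx n w = ∑ d ∈ n.divisors, ∑ a ∈ Ico 1 (n / d), w a (n / d - a) := by
  have key : Sxx n w = ∑ p ∈ (n.divisors.sigma fun d => Ico 1 (n / d)), w p.2 (n / p.1 - p.2) := by
    rw [Sxx]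
    refine (Finset.sum_nbij' (fun p => ((p.2, p.1), (n / p.1 - p.2, p.1)))
      (fun t => ⟨t.1.2, t.1.1⟩) ?_ ?_ ?_ ?_ ?_).symm <;> intro p hp
    · obtain ⟨d, a⟩ := p
      simp only [Finset.mem_sigma, Nat.mem_divisors, mem_Ico] at hp
      obtain ⟨⟨hdvd, hn0⟩, ha1, ha2⟩ := hp
      simp only [mem_filter, mem_Qs]
      have hd0 : 0 < d := Nat.pos_of_dvd_of_pos hdvd (Nat.pos_of_ne_zero hn0)
      have e1 : a + (n / d - a) = n / d := by omega
      have e2 : a * d + (n / d - a) * d = (n / d) * d := by rw [← Nat.add_mul, e1]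
      have e3 : (n / d) * d = n := Nat.div_mul_cancel hdvd
      exact ⟨⟨ha1, hd0, by omega, hd0, by omega⟩, trivial⟩
    · obtain ⟨⟨a, x⟩, b, y⟩ := p
      simp only [mem_filter, mem_Qs] at hp
      obtain ⟨⟨ha, hx, hb, hy, h⟩, heq⟩ := hp
      simp only at heq h ha hx hb hy ⊢
      subst heq
      simp only [Finset.mem_sigma, Nat.mem_divisors, mem_Ico]
      have hdvd : x ∣ n := ⟨a + b, by rw [Nat.mul_comm, Nat.add_mul]; omega⟩
      have h2 : (a + b) * x = n := by rw [Nat.add_mul]; omega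
      have hnd : n / x = a + b := Nat.div_eq_of_eq_mul_left (by omega) h2.symm
      have hax : 0 < a * x := Nat.mul_pos ha hx
      have hbx : 0 < b * x := Nat.mul_pos hb hy
      refine ⟨⟨hdvd, by omega⟩, ha, by omega⟩
    · obtain ⟨d, a⟩ := p
      rfl
    · obtain ⟨⟨a, x⟩, b, y⟩ := p
      simp only [mem_filter, mem_Qs] at hp
      obtain ⟨⟨ha, hx, hb, hy, h⟩, heq⟩ := hp
      simp only at heq h ha hx hb hy ⊢
      subst heq
      have h2 : (a + b) * x = n := by rw [Nat.add_mul]; omega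
      have hnd : n / x = a + b := Nat.div_eq_of_eq_mul_left (by omega) h2.symm
      have e : n / x - a = b := by omega
      rw [e]
    · obtain ⟨d, a⟩ := p
      rfl
  rw [key, Finset.sum_sigma]

lemma Sf_eval (n : ℕ) (u v : ℕ → ℚ) :
    Sf n (fun a b => u a * v b)
      = ∑ k ∈ Ico 1 n, (∑ d ∈ k.divisors, u d) * (∑ d ∈ (n - k).divisors, v d) := by
  rw [Sf, ← Finset.sum_fiberwise_of_maps_to (g := fun t => t.1.1 * t.1.2) (t := Ico 1 n) ?_]
  · refine Finset.sum_congr rfl fun k hk => ?_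
    simp only [mem_Ico] at hk
    have hset : ((Qs n).filter fun t => t.1.1 * t.1.2 = k)
        = k.divisorsAntidiagonal ×ˢ (n - k).divisorsAntidiagonal := by
      ext ⟨⟨a, x⟩, b, y⟩
      simp only [mem_filter, mem_Qs, Finset.mem_product, Nat.mem_divisorsAntidiagonal]
      constructor
      · rintro ⟨⟨ha, hx, hb, hy, h⟩, hax⟩
        exact ⟨⟨hax, by omega⟩, by omega, by omega⟩
      · rintro ⟨⟨hax, hk0⟩, hby, hnk0⟩
        have h1 : a ≠ 0 ∧ x ≠ 0 := Nat.mul_ne_zero_iff.mp (by omega)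
        have h2 : b ≠ 0 ∧ y ≠ 0 := Nat.mul_ne_zero_iff.mp (by omega)
        exact ⟨⟨by omega, by omega, by omega, by omega, by omega⟩, hax⟩
    rw [hset, Finset.sum_product]
    rw [← Nat.sum_divisorsAntidiagonal (fun a _ => u a), ← Nat.sum_divisorsAntidiagonal (fun a _ => v a)]
    rw [Finset.sum_mul_sum]
  · intro t ht
    rw [mem_Qs] at ht
    obtain ⟨ha, hx, hb, hy, h⟩ := ht
    have h1 : 0 < t.1.1 * t.1.2 := Nat.mul_pos ha hx
    have h2 : 0 < t.2.1 * t.2.2 := Nat.mul_pos hb hy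
    simp only [mem_Ico]
    omega

lemma reflect (n : ℕ) (F : ℕ → ℕ → ℚ) :
    ∑ k ∈ Ico 1 n, F k (n - k) = ∑ k ∈ Ico 1 n, F (n - k) k := by
  refine Finset.sum_nbij' (fun k => n - k) (fun k => n - k) ?_ ?_ ?_ ?_ ?_ <;>
    intro k hk <;> simp only [mem_Ico] at *
  · omega
  · omega
  · omega
  · omega
  · rw [show n - (n - k) = k by omega]


lemma fh0 (m : ℕ) (hm : 1 ≤ m) : ∑ a ∈ Ico 1 m, ((a:ℕ):ℚ)^0 = (-1 : ℚ) * (m:ℚ)^0 + (1 : ℚ) * (m:ℚ)^1 := by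
  induction m, hm using Nat.le_induction with
  | base => norm_num
  | succ m hm ih =>
    rw [Finset.sum_Ico_succ_top (by omega)]
    rw [ih]; push_cast; ring

lemma fh1 (m : ℕ) (hm : 1 ≤ m) : ∑ a ∈ Ico 1 m, ((a:ℕ):ℚ)^1 = (-1/2 : ℚ) * (m:ℚ)^1 + (1/2 : ℚ) * (m:ℚ)^2 := by
  induction m, hm using Nat.le_induction with
  | base => norm_num
  | succ m hm ih =>
    rw [Finset.sum_Ico_succ_top (by omega)]
    rw [ih]; push_cast; ring

lemma fh2 (m : ℕ) (hm : 1 ≤ m) : ∑ a ∈ Ico 1 m, ((a:ℕ):ℚ)^2 = (1/6 : ℚ) * (m:ℚ)^1 + (-1/2 : ℚ) * (m:ℚ)^2 + (1/3 : ℚ) * (m:ℚ)^3 := by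
  induction m, hm using Nat.le_induction with
  | base => norm_num
  | succ m hm ih =>
    rw [Finset.sum_Ico_succ_top (by omega)]
    rw [ih]; push_cast; ring

lemma fh3 (m : ℕ) (hm : 1 ≤ m) : ∑ a ∈ Ico 1 m, ((a:ℕ):ℚ)^3 = (1/4 : ℚ) * (m:ℚ)^2 + (-1/2 : ℚ) * (m:ℚ)^3 + (1/4 : ℚ) * (m:ℚ)^4 := by
  induction m, hm using Nat.le_induction with
  | base => norm_num
  | succ m hm ih =>
    rw [Finset.sum_Ico_succ_top (by omega)]
    rw [ih]; push_cast; ring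

lemma fh4 (m : ℕ) (hm : 1 ≤ m) : ∑ a ∈ Ico 1 m, ((a:ℕ):ℚ)^4 = (-1/30 : ℚ) * (m:ℚ)^1 + (1/3 : ℚ) * (m:ℚ)^3 + (-1/2 : ℚ) * (m:ℚ)^4 + (1/5 : ℚ) * (m:ℚ)^5 := by
  induction m, hm using Nat.le_induction with
  | base => norm_num
  | succ m hm ih =>
    rw [Finset.sum_Ico_succ_top (by omega)]
    rw [ih]; push_cast; ring

lemma fh5 (m : ℕ) (hm : 1 ≤ m) : ∑ a ∈ Ico 1 m, ((a:ℕ):ℚ)^5 = (-1/12 : ℚ) * (m:ℚ)^2 + (5/12 : ℚ) * (m:ℚ)^4 + (-1/2 : ℚ) * (m:ℚ)^5 + (1/6 : ℚ) * (m:ℚ)^6 := by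
  induction m, hm using Nat.le_induction with
  | base => norm_num
  | succ m hm ih =>
    rw [Finset.sum_Ico_succ_top (by omega)]
    rw [ih]; push_cast; ring

lemma fh6 (m : ℕ) (hm : 1 ≤ m) : ∑ a ∈ Ico 1 m, ((a:ℕ):ℚ)^6 = (1/42 : ℚ) * (m:ℚ)^1 + (-1/6 : ℚ) * (m:ℚ)^3 + (1/2 : ℚ) * (m:ℚ)^5 + (-1/2 : ℚ) * (m:ℚ)^6 + (1/7 : ℚ) * (m:ℚ)^7 := by
  induction m, hm using Nat.le_induction with
  | base => norm_num
  | succ m hm ih =>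
    rw [Finset.sum_Ico_succ_top (by omega)]
    rw [ih]; push_cast; ring

lemma inner_wb (m : ℕ) (hm : 1 ≤ m) :
    ∑ a ∈ Ico 1 m, (fun a b : ℕ => (1 : ℚ) * ((a:ℕ):ℚ)^0 * ((b:ℕ):ℚ)^4 + (-2 : ℚ) * ((a:ℕ):ℚ)^1 * ((b:ℕ):ℚ)^3 + (3 : ℚ) * ((a:ℕ):ℚ)^2 * ((b:ℕ):ℚ)^2 + (-2 : ℚ) * ((a:ℕ):ℚ)^3 * ((b:ℕ):ℚ)^1 + (1 : ℚ) * ((a:ℕ):ℚ)^4 * ((b:ℕ):ℚ)^0) a (m - a) = (-3/10 : ℚ) * (m:ℚ)^1 + (1 : ℚ) * (m:ℚ)^3 + (-1 : ℚ) * (m:ℚ)^4 + (3/10 : ℚ) * (m:ℚ)^5 := by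
  have key : ∀ a ∈ Ico 1 m, (fun a b : ℕ => (1 : ℚ) * ((a:ℕ):ℚ)^0 * ((b:ℕ):ℚ)^4 + (-2 : ℚ) * ((a:ℕ):ℚ)^1 * ((b:ℕ):ℚ)^3 + (3 : ℚ) * ((a:ℕ):ℚ)^2 * ((b:ℕ):ℚ)^2 + (-2 : ℚ) * ((a:ℕ):ℚ)^3 * ((b:ℕ):ℚ)^1 + (1 : ℚ) * ((a:ℕ):ℚ)^4 * ((b:ℕ):ℚ)^0) a (m - a)
      = ((1 : ℚ) * (m:ℚ)^4) * (a:ℚ)^0 + ((-6 : ℚ) * (m:ℚ)^3) * (a:ℚ)^1 + ((15 : ℚ) * (m:ℚ)^2) * (a:ℚ)^2 + ((-18 : ℚ) * (m:ℚ)^1) * (a:ℚ)^3 + ((9 : ℚ)) * (a:ℚ)^4 := by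
    intro a ha
    simp only [mem_Ico] at ha
    have hc : ((m - a : ℕ) : ℚ) = (m : ℚ) - (a : ℚ) := by
      have : a ≤ m := by omega
      push_cast [this]; ring
    simp only [hc]; ring
  rw [Finset.sum_congr rfl key]
  simp only [Finset.sum_add_distrib, ← Finset.mul_sum]
  simp only [fh0 m hm, fh1 m hm, fh2 m hm, fh3 m hm, fh4 m hm, fh5 m hm, fh6 m hm]
  ring

lemma inner_vb (m : ℕ) (hm : 1 ≤ m) :
    ∑ a ∈ Ico 1 m, (fun a b : ℕ => (8 : ℚ) * ((a:ℕ):ℚ)^1 * ((b:ℕ):ℚ)^3 + (8 : ℚ) * ((a:ℕ):ℚ)^3 * ((b:ℕ):ℚ)^1) a (m - a) = (8/15 : ℚ) * (m:ℚ)^1 + (-4/3 : ℚ) * (m:ℚ)^3 + (4/5 : ℚ) * (m:ℚ)^5 := by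
  have key : ∀ a ∈ Ico 1 m, (fun a b : ℕ => (8 : ℚ) * ((a:ℕ):ℚ)^1 * ((b:ℕ):ℚ)^3 + (8 : ℚ) * ((a:ℕ):ℚ)^3 * ((b:ℕ):ℚ)^1) a (m - a)
      = ((8 : ℚ) * (m:ℚ)^3) * (a:ℚ)^1 + ((-24 : ℚ) * (m:ℚ)^2) * (a:ℚ)^2 + ((32 : ℚ) * (m:ℚ)^1) * (a:ℚ)^3 + ((-16 : ℚ)) * (a:ℚ)^4 := by
    intro a ha
    simp only [mem_Ico] at ha
    have hc : ((m - a : ℕ) : ℚ) = (m : ℚ) - (a : ℚ) := by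
      have : a ≤ m := by omega
      push_cast [this]; ring
    simp only [hc]; ring
  rw [Finset.sum_congr rfl key]
  simp only [Finset.sum_add_distrib, ← Finset.mul_sum]
  simp only [fh0 m hm, fh1 m hm, fh2 m hm, fh3 m hm, fh4 m hm, fh5 m hm, fh6 m hm]
  ring

lemma inner_wc (m : ℕ) (hm : 1 ≤ m) :
    ∑ a ∈ Ico 1 m, (fun a b : ℕ => (14 : ℚ) * ((a:ℕ):ℚ)^0 * ((b:ℕ):ℚ)^6 + (-42 : ℚ) * ((a:ℕ):ℚ)^1 * ((b:ℕ):ℚ)^5 + (-165 : ℚ) * ((a:ℕ):ℚ)^2 * ((b:ℕ):ℚ)^4 + (400 : ℚ) * ((a:ℕ):ℚ)^3 * ((b:ℕ):ℚ)^3 + (-165 : ℚ) * ((a:ℕ):ℚ)^4 * ((b:ℕ):ℚ)^2 + (-42 : ℚ) * ((a:ℕ):ℚ)^5 * ((b:ℕ):ℚ)^1 + (14 : ℚ) * ((a:ℕ):ℚ)^6 * ((b:ℕ):ℚ)^0) a (m - a) = (-103/7 : ℚ) * (m:ℚ)^1 + (6 : ℚ) * (m:ℚ)^3 + (21 : ℚ)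 * (m:ℚ)^5 + (-14 : ℚ) * (m:ℚ)^6 + (12/7 : ℚ) * (m:ℚ)^7 := by
  have key : ∀ a ∈ Ico 1 m, (fun a b : ℕ => (14 : ℚ) * ((a:ℕ):ℚ)^0 * ((b:ℕ):ℚ)^6 + (-42 : ℚ) * ((a:ℕ):ℚ)^1 * ((b:ℕ):ℚ)^5 + (-165 : ℚ) * ((a:ℕ):ℚ)^2 * ((b:ℕ):ℚ)^4 + (400 : ℚ) * ((a:ℕ):ℚ)^3 * ((b:ℕ):ℚ)^3 + (-165 : ℚ) * ((a:ℕ):ℚ)^4 * ((b:ℕ):ℚ)^2 + (-42 : ℚ) * ((a:ℕ):ℚ)^5 * ((b:ℕ):ℚ)^1 + (14 : ℚ) * ((a:ℕ):ℚ)^6 * ((b:ℕ):ℚ)^0) a (m - a)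
      = ((14 : ℚ) * (m:ℚ)^6) * (a:ℚ)^0 + ((-126 : ℚ) * (m:ℚ)^5) * (a:ℚ)^1 + ((255 : ℚ) * (m:ℚ)^4) * (a:ℚ)^2 + ((360 : ℚ) * (m:ℚ)^3) * (a:ℚ)^3 + ((-1725 : ℚ) * (m:ℚ)^2) * (a:ℚ)^4 + ((1854 : ℚ) * (m:ℚ)^1) * (a:ℚ)^5 + ((-618 : ℚ)) * (a:ℚ)^6 := by
    intro a ha
    simp only [mem_Ico] at ha
    have hc : ((m - a : ℕ) : ℚ) = (m : ℚ) - (a : ℚ) := by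
      have : a ≤ m := by omega
      push_cast [this]; ring
    simp only [hc]; ring
  rw [Finset.sum_congr rfl key]
  simp only [Finset.sum_add_distrib, ← Finset.mul_sum]
  simp only [fh0 m hm, fh1 m hm, fh2 m hm, fh3 m hm, fh4 m hm, fh5 m hm, fh6 m hm]
  ring

lemma inner_vc (m : ℕ) (hm : 1 ≤ m) :
    ∑ a ∈ Ico 1 m, (fun a b : ℕ => (168 : ℚ) * ((a:ℕ):ℚ)^1 * ((b:ℕ):ℚ)^5 + (-1600 : ℚ) * ((a:ℕ):ℚ)^3 * ((b:ℕ):ℚ)^3 + (168 : ℚ) * ((a:ℕ):ℚ)^5 * ((b:ℕ):ℚ)^1) a (m - a) = (632/21 : ℚ) * (m:ℚ)^1 + (4/3 : ℚ) * (m:ℚ)^3 + (-28 : ℚ) * (m:ℚ)^5 + (-24/7 : ℚ) * (m:ℚ)^7 := by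
  have key : ∀ a ∈ Ico 1 m, (fun a b : ℕ => (168 : ℚ) * ((a:ℕ):ℚ)^1 * ((b:ℕ):ℚ)^5 + (-1600 : ℚ) * ((a:ℕ):ℚ)^3 * ((b:ℕ):ℚ)^3 + (168 : ℚ) * ((a:ℕ):ℚ)^5 * ((b:ℕ):ℚ)^1) a (m - a)
      = ((168 : ℚ) * (m:ℚ)^5) * (a:ℚ)^1 + ((-840 : ℚ) * (m:ℚ)^4) * (a:ℚ)^2 + ((80 : ℚ) * (m:ℚ)^3) * (a:ℚ)^3 + ((3120 : ℚ) * (m:ℚ)^2) * (a:ℚ)^4 + ((-3792 : ℚ) * (m:ℚ)^1) * (a:ℚ)^5 + ((1264 : ℚ)) * (a:ℚ)^6 := by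
    intro a ha
    simp only [mem_Ico] at ha
    have hc : ((m - a : ℕ) : ℚ) = (m : ℚ) - (a : ℚ) := by
      have : a ≤ m := by omega
      push_cast [this]; ring
    simp only [hc]; ring
  rw [Finset.sum_congr rfl key]
  simp only [Finset.sum_add_distrib, ← Finset.mul_sum]
  simp only [fh0 m hm, fh1 m hm, fh2 m hm, fh3 m hm, fh4 m hm, fh5 m hm, fh6 m hm]
  ring


lemma Sf_mono (n r s : ℕ) :
    Sf n (fun a b => (a:ℚ)^r * (b:ℚ)^s) = ∑ k ∈ Ico 1 n, sg r k * sg s (n - k) :=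
  Sf_eval n (fun x : ℕ => (x:ℚ)^r) (fun x : ℕ => (x:ℚ)^s)

lemma reflect_sg (n r s : ℕ) :
    ∑ k ∈ Ico 1 n, sg r k * sg s (n - k) = ∑ k ∈ Ico 1 n, sg s k * sg r (n - k) := by
  refine Finset.sum_nbij' (fun k => n - k) (fun k => n - k) ?_ ?_ ?_ ?_ ?_ <;>
    intro k hk <;> simp only [mem_Ico] at *
  · omega
  · omega
  · omega
  · omega
  · rw [show n - (n - k) = k by omega]; ring

lemma identB (n : ℕ) : 240 * (∑ k ∈ Ico 1 n, sg 1 k * sg 3 (n - k)) = 21 * sg 5 n + 10 * sg 3 n - sg 1 n - 30 * (n:ℚ) * sg 3 n := by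
  classical
  set w : ℕ → ℕ → ℚ := (fun a b : ℕ => (1 : ℚ) * ((a:ℕ):ℚ)^0 * ((b:ℕ):ℚ)^4 + (-2 : ℚ) * ((a:ℕ):ℚ)^1 * ((b:ℕ):ℚ)^3 + (3 : ℚ) * ((a:ℕ):ℚ)^2 * ((b:ℕ):ℚ)^2 + (-2 : ℚ) * ((a:ℕ):ℚ)^3 * ((b:ℕ):ℚ)^1 + (1 : ℚ) * ((a:ℕ):ℚ)^4 * ((b:ℕ):ℚ)^0) with hw
  set v : ℕ → ℕ → ℚ := (fun a b : ℕ => (8 : ℚ) * ((a:ℕ):ℚ)^1 * ((b:ℕ):ℚ)^3 + (8 : ℚ) * ((a:ℕ):ℚ)^3 * ((b:ℕ):ℚ)^1) with hv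
  have hM := master n w
  have e1 : Syx n (fun a b => w (a + b) b) + Syx n (fun a b => w b (a + b))
      = Syx n w + Syx n (fun a b => w b a) + Syx n v := by
    simp only [Syx, ← Finset.sum_add_distrib]
    refine Finset.sum_congr rfl fun t _ => ?_
    simp only [hw, hv]; push_cast; ring
  have key1 : Syx n v + Saa n w = Sxx n w := by linarith
  have hsym : Sxy n v = Syx n v := by
    rw [swap_xy]
    refine Finset.sum_congr rfl fun t _ => ?_
    simp only [hv]; ring
  have e2 : Sf n v = Syx n v + Syx n v + Sxx n v := by
    have h := split_xy n v
    rw [hsym] at h; linarith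
  have hdiv : ∀ t : ℕ, ∑ d ∈ n.divisors, ((n / d : ℕ) : ℚ) ^ t = sg t n := by
    intro t
    rw [sg]
    exact Nat.sum_div_divisors n (fun x => (x : ℚ) ^ t)
  have hSaa : Saa n w = (1 : ℚ) * ((n : ℚ) * sg 3 n) - (1 : ℚ) * sg 4 n := by
    rw [Saa_eval]
    have step : ∀ d ∈ n.divisors, (((n / d : ℕ) : ℚ) - 1) * w d d
        = (1 : ℚ) * ((n : ℚ) * (d : ℚ) ^ 3) - (1 : ℚ) * (d : ℚ) ^ 4 := by
      intro d hd
      rw [Nat.mem_divisors] at hd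
      have hdn : ((n / d : ℕ) : ℚ) * (d : ℚ) = (n : ℚ) := by
        rw_mod_cast [Nat.div_mul_cancel hd.1]
      simp only [hw]
      push_cast
      linear_combination (1 : ℚ) * (d : ℚ) ^ 3 * hdn
    rw [Finset.sum_congr rfl step]
    simp only [Finset.sum_sub_distrib, ← Finset.mul_sum, sg]
  have hSxxw : Sxx n w = (-3/10 : ℚ) * sg 1 n + sg 3 n - sg 4 n + (3/10 : ℚ) * sg 5 n := by
    rw [Sxx_eval]
    have step2 : ∀ d ∈ n.divisors, (∑ a ∈ Ico 1 (n / d), w a (n / d - a)) = (-3/10 : ℚ) * ((n / d : ℕ) : ℚ)^1 + (1 : ℚ) * ((n / d : ℕ) : ℚ)^3 + (-1 : ℚ) * ((n / d : ℕ) : ℚ)^4 + (3/10 : ℚ) * ((n / d : ℕ) : ℚ)^5 := by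
      intro d hd
      rw [Nat.mem_divisors] at hd
      have hm : 1 ≤ n / d := (Nat.one_le_div_iff (Nat.pos_of_dvd_of_pos hd.1 (Nat.pos_of_ne_zero hd.2))).mpr (Nat.le_of_dvd (Nat.pos_of_ne_zero hd.2) hd.1)
      simpa only [← hw] using inner_wb (n / d) hm
    rw [Finset.sum_congr rfl step2]
    simp only [Finset.sum_add_distrib, ← Finset.mul_sum, hdiv]
    ring
  have hSxxv : Sxx n v = (8/15 : ℚ) * sg 1 n - (4/3 : ℚ) * sg 3 n + (4/5 : ℚ) * sg 5 n := by
    rw [Sxx_eval]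
    have step2 : ∀ d ∈ n.divisors, (∑ a ∈ Ico 1 (n / d), v a (n / d - a)) = (8/15 : ℚ) * ((n / d : ℕ) : ℚ)^1 + (-4/3 : ℚ) * ((n / d : ℕ) : ℚ)^3 + (4/5 : ℚ) * ((n / d : ℕ) : ℚ)^5 := by
      intro d hd
      rw [Nat.mem_divisors] at hd
      have hm : 1 ≤ n / d := (Nat.one_le_div_iff (Nat.pos_of_dvd_of_pos hd.1 (Nat.pos_of_ne_zero hd.2))).mpr (Nat.le_of_dvd (Nat.pos_of_ne_zero hd.2) hd.1)
      simpa only [← hv] using inner_vb (n / d) hm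
    rw [Finset.sum_congr rfl step2]
    simp only [Finset.sum_add_distrib, ← Finset.mul_sum, hdiv]
    ring
  have hv1 : Sf n v = 8 * Sf n (fun a b => (a:ℚ)^3 * (b:ℚ)^1) + 8 * Sf n (fun a b => (a:ℚ)^1 * (b:ℚ)^3) := by
    simp only [Sf, Finset.mul_sum, ← Finset.sum_add_distrib]
    refine Finset.sum_congr rfl fun t _ => ?_
    simp only [hv]; ring
  have hSf : Sf n v = 16 * ∑ k ∈ Ico 1 n, sg 1 k * sg 3 (n - k) := by
    rw [hv1, Sf_mono n 3 1, Sf_mono n 1 3, reflect_sg n 3 1]; ring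
  linear_combination (-15 : ℚ) * hSf + 30 * key1 + 15 * e2 + (-30 : ℚ) * hSaa + 30 * hSxxw + 15 * hSxxv

lemma identC (n : ℕ) : 1008 * (∑ k ∈ Ico 1 n, sg 1 k * sg 5 (n - k)) - 4800 * (∑ k ∈ Ico 1 n, sg 3 k * sg 3 (n - k)) = 42 * sg 5 n + 40 * sg 3 n + 2 * sg 1 n - 84 * (n:ℚ) * sg 5 n := by
  classical
  set w : ℕ → ℕ → ℚ := (fun a b : ℕ => (14 : ℚ) * ((a:ℕ):ℚ)^0 * ((b:ℕ):ℚ)^6 + (-42 : ℚ) * ((a:ℕ):ℚ)^1 * ((b:ℕ):ℚ)^5 + (-165 : ℚ) * ((a:ℕ):ℚ)^2 * ((b:ℕ):ℚ)^4 + (400 : ℚ) * ((a:ℕ):ℚ)^3 * ((b:ℕ):ℚ)^3 + (-165 : ℚ) * ((a:ℕ):ℚ)^4 * ((b:ℕ):ℚ)^2 + (-42 : ℚ) * ((a:ℕ):ℚ)^5 * ((b:ℕ):ℚ)^1 + (14 : ℚ) * ((a:ℕ):ℚ)^6 * ((b:ℕ):ℚ)^0) with hw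
  set v : ℕ → ℕ → ℚ := (fun a b : ℕ => (168 : ℚ) * ((a:ℕ):ℚ)^1 * ((b:ℕ):ℚ)^5 + (-1600 : ℚ) * ((a:ℕ):ℚ)^3 * ((b:ℕ):ℚ)^3 + (168 : ℚ) * ((a:ℕ):ℚ)^5 * ((b:ℕ):ℚ)^1) with hv
  have hM := master n w
  have e1 : Syx n (fun a b => w (a + b) b) + Syx n (fun a b => w b (a + b))
      = Syx n w + Syx n (fun a b => w b a) + Syx n v := by
    simp only [Syx, ← Finset.sum_add_distrib]
    refine Finset.sum_congr rfl fun t _ => ?_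
    simp only [hw, hv]; push_cast; ring
  have key1 : Syx n v + Saa n w = Sxx n w := by linarith
  have hsym : Sxy n v = Syx n v := by
    rw [swap_xy]
    refine Finset.sum_congr rfl fun t _ => ?_
    simp only [hv]; ring
  have e2 : Sf n v = Syx n v + Syx n v + Sxx n v := by
    have h := split_xy n v
    rw [hsym] at h; linarith
  have hdiv : ∀ t : ℕ, ∑ d ∈ n.divisors, ((n / d : ℕ) : ℚ) ^ t = sg t n := by
    intro t
    rw [sg]
    exact Nat.sum_div_divisors n (fun x => (x : ℚ) ^ t)
  have hSaa : Saa n w = (14 : ℚ) * ((n : ℚ) * sg 5 n) - (14 : ℚ) * sg 6 n := by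
    rw [Saa_eval]
    have step : ∀ d ∈ n.divisors, (((n / d : ℕ) : ℚ) - 1) * w d d
        = (14 : ℚ) * ((n : ℚ) * (d : ℚ) ^ 5) - (14 : ℚ) * (d : ℚ) ^ 6 := by
      intro d hd
      rw [Nat.mem_divisors] at hd
      have hdn : ((n / d : ℕ) : ℚ) * (d : ℚ) = (n : ℚ) := by
        rw_mod_cast [Nat.div_mul_cancel hd.1]
      simp only [hw]
      push_cast
      linear_combination (14 : ℚ) * (d : ℚ) ^ 5 * hdn
    rw [Finset.sum_congr rfl step]
    simp only [Finset.sum_sub_distrib, ← Finset.mul_sum, sg]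
  have hSxxw : Sxx n w = (-103/7 : ℚ) * sg 1 n + 6 * sg 3 n + 21 * sg 5 n - 14 * sg 6 n + (12/7 : ℚ) * sg 7 n := by
    rw [Sxx_eval]
    have step2 : ∀ d ∈ n.divisors, (∑ a ∈ Ico 1 (n / d), w a (n / d - a)) = (-103/7 : ℚ) * ((n / d : ℕ) : ℚ)^1 + (6 : ℚ) * ((n / d : ℕ) : ℚ)^3 + (21 : ℚ) * ((n / d : ℕ) : ℚ)^5 + (-14 : ℚ) * ((n / d : ℕ) : ℚ)^6 + (12/7 : ℚ) * ((n / d : ℕ) : ℚ)^7 := by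
      intro d hd
      rw [Nat.mem_divisors] at hd
      have hm : 1 ≤ n / d := (Nat.one_le_div_iff (Nat.pos_of_dvd_of_pos hd.1 (Nat.pos_of_ne_zero hd.2))).mpr (Nat.le_of_dvd (Nat.pos_of_ne_zero hd.2) hd.1)
      simpa only [← hw] using inner_wc (n / d) hm
    rw [Finset.sum_congr rfl step2]
    simp only [Finset.sum_add_distrib, ← Finset.mul_sum, hdiv]
    ring
  have hSxxv : Sxx n v = (632/21 : ℚ) * sg 1 n + (4/3 : ℚ) * sg 3 n - 28 * sg 5 n - (24/7 : ℚ) * sg 7 n := by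
    rw [Sxx_eval]
    have step2 : ∀ d ∈ n.divisors, (∑ a ∈ Ico 1 (n / d), v a (n / d - a)) = (632/21 : ℚ) * ((n / d : ℕ) : ℚ)^1 + (4/3 : ℚ) * ((n / d : ℕ) : ℚ)^3 + (-28 : ℚ) * ((n / d : ℕ) : ℚ)^5 + (-24/7 : ℚ) * ((n / d : ℕ) : ℚ)^7 := by
      intro d hd
      rw [Nat.mem_divisors] at hd
      have hm : 1 ≤ n / d := (Nat.one_le_div_iff (Nat.pos_of_dvd_of_pos hd.1 (Nat.pos_of_ne_zero hd.2))).mpr (Nat.le_of_dvd (Nat.pos_of_ne_zero hd.2) hd.1)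
      simpa only [← hv] using inner_vc (n / d) hm
    rw [Finset.sum_congr rfl step2]
    simp only [Finset.sum_add_distrib, ← Finset.mul_sum, hdiv]
    ring
  have hv1 : Sf n v = 168 * Sf n (fun a b => (a:ℚ)^5 * (b:ℚ)^1) + 168 * Sf n (fun a b => (a:ℚ)^1 * (b:ℚ)^5) - 1600 * Sf n (fun a b => (a:ℚ)^3 * (b:ℚ)^3) := by
    simp only [Sf, Finset.mul_sum, ← Finset.sum_sub_distrib, ← Finset.sum_add_distrib]
    refine Finset.sum_congr rfl fun t _ => ?_
    simp only [hv]; ring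
  have hSf : Sf n v = 336 * (∑ k ∈ Ico 1 n, sg 1 k * sg 5 (n - k)) - 1600 * ∑ k ∈ Ico 1 n, sg 3 k * sg 3 (n - k) := by
    rw [hv1, Sf_mono n 5 1, Sf_mono n 1 5, Sf_mono n 3 3, reflect_sg n 5 1]; ring
  linear_combination (-3 : ℚ) * hSf + 6 * key1 + 3 * e2 + (-6 : ℚ) * hSaa + 6 * hSxxw + 3 * hSxxv



noncomputable def E2 : PowerSeries ℚ :=
  PowerSeries.mk fun n => if n = 0 then 1 else -24 * sg 1 n

lemma coeff_E2_zero : coeff (R := ℚ) 0 E2 = 1 := by simp [E2]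
lemma coeff_E2 (k : ℕ) (h : k ≠ 0) : coeff (R := ℚ) k E2 = -24 * sg 1 k := by simp [E2, h]
lemma coeff_E4_zero : coeff (R := ℚ) 0 EisensteinE4 = 1 := by simp [EisensteinE4]
lemma coeff_E4 (k : ℕ) (h : k ≠ 0) : coeff (R := ℚ) k EisensteinE4 = 240 * sg 3 k := by
  simp [EisensteinE4, sg, h]
lemma coeff_E6_zero : coeff (R := ℚ) 0 EisensteinE6 = 1 := by simp [EisensteinE6]
lemma coeff_E6 (k : ℕ) (h : k ≠ 0) : coeff (R := ℚ) k EisensteinE6 = -504 * sg 5 k := by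
  simp [EisensteinE6, sg, h]

lemma coeff_mul_eisen (A B : ℚ⟦X⟧) (a b : ℕ → ℚ)
    (hA0 : coeff (R := ℚ) 0 A = 1) (hB0 : coeff (R := ℚ) 0 B = 1)
    (hA : ∀ k, k ≠ 0 → coeff (R := ℚ) k A = a k) (hB : ∀ k, k ≠ 0 → coeff (R := ℚ) k B = b k) (m : ℕ) :
    coeff (R := ℚ) (m + 1) (A * B)
      = a (m + 1) + b (m + 1) + ∑ k ∈ Ico 1 (m + 1), a k * b (m + 1 - k) := by
  rw [coeff_mul, Finset.Nat.sum_antidiagonal_eq_sum_range_succ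
    (fun i j => coeff (R := ℚ) i A * coeff (R := ℚ) j B) (m + 1)]
  rw [Finset.sum_range_succ']
  rw [Finset.sum_range_succ]
  have hmid : ∀ i ∈ range m, coeff (R := ℚ) (i + 1) A * coeff (R := ℚ) (m + 1 - (i + 1)) B
      = a (i + 1) * b (m - i) := by
    intro i hi
    simp only [mem_range] at hi
    rw [hA _ (by omega), show m + 1 - (i + 1) = m - i by omega, hB _ (by omega)]
  rw [Finset.sum_congr rfl hmid]
  have hre : ∑ k ∈ Ico 1 (m + 1), a k * b (m + 1 - k) = ∑ i ∈ range m, a (i + 1) * b (m - i) := by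
    rw [Finset.sum_Ico_eq_sum_range]
    refine Finset.sum_congr (by norm_num) fun i hi => ?_
    rw [show 1 + i = i + 1 by ring, show m + 1 - (i + 1) = m - i by omega]
  rw [hre]
  simp only [Nat.sub_self, Nat.sub_zero]
  rw [hA _ (Nat.succ_ne_zero m), hB _ (Nat.succ_ne_zero m), hA0, hB0]
  ring

lemma coeff_X_mul_dX (f : ℚ⟦X⟧) (n : ℕ) :
    coeff (R := ℚ) n (X * d⁄dX ℚ f) = n * coeff (R := ℚ) n f := by
  cases n with
  | zero => simp
  | succ m =>
    rw [coeff_succ_X_mul, coeff_derivative]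
    push_cast
    ring

lemma E4ode : (3 : ℚ) • (X * d⁄dX ℚ EisensteinE4) = E2 * EisensteinE4 - EisensteinE6 := by
  ext n
  rw [map_smul, smul_eq_mul, coeff_X_mul_dX, map_sub]
  cases n with
  | zero => rw [coeff_E4_zero, coeff_E6_zero]; simp [coeff_mul, coeff_E2_zero, coeff_E4_zero]
  | succ m =>
    rw [coeff_mul_eisen E2 EisensteinE4 (fun k => -24 * sg 1 k) (fun k => 240 * sg 3 k)
      coeff_E2_zero coeff_E4_zero coeff_E2 coeff_E4 m]
    rw [coeff_E4 _ (by omega), coeff_E6 _ (by omega)]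
    have hc : ∑ k ∈ Ico 1 (m + 1), (-24 * sg 1 k) * (240 * sg 3 (m + 1 - k))
        = -5760 * ∑ k ∈ Ico 1 (m + 1), sg 1 k * sg 3 (m + 1 - k) := by
      rw [Finset.mul_sum]
      exact Finset.sum_congr rfl fun k _ => by ring
    rw [hc]
    have hB := identB (m + 1)
    push_cast at hB ⊢
    linear_combination (24 : ℚ) * hB

lemma E6ode : (2 : ℚ) • (X * d⁄dX ℚ EisensteinE6) = E2 * EisensteinE6 - EisensteinE4 ^ 2 := by
  ext n
  rw [map_smul, smul_eq_mul, coeff_X_mul_dX, map_sub, pow_two]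
  cases n with
  | zero => rw [coeff_E6_zero]; simp [coeff_mul, coeff_E2_zero, coeff_E4_zero, coeff_E6_zero]
  | succ m =>
    rw [coeff_mul_eisen E2 EisensteinE6 (fun k => -24 * sg 1 k) (fun k => -504 * sg 5 k)
      coeff_E2_zero coeff_E6_zero coeff_E2 coeff_E6 m]
    rw [coeff_mul_eisen EisensteinE4 EisensteinE4 (fun k => 240 * sg 3 k) (fun k => 240 * sg 3 k)
      coeff_E4_zero coeff_E4_zero coeff_E4 coeff_E4 m]
    rw [coeff_E6 _ (by omega)]
    have hc1 : ∑ k ∈ Ico 1 (m + 1), (-24 * sg 1 k) * (-504 * sg 5 (m + 1 - k))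
        = 12096 * ∑ k ∈ Ico 1 (m + 1), sg 1 k * sg 5 (m + 1 - k) := by
      rw [Finset.mul_sum]
      exact Finset.sum_congr rfl fun k _ => by ring
    have hc2 : ∑ k ∈ Ico 1 (m + 1), (240 * sg 3 k) * (240 * sg 3 (m + 1 - k))
        = 57600 * ∑ k ∈ Ico 1 (m + 1), sg 3 k * sg 3 (m + 1 - k) := by
      rw [Finset.mul_sum]
      exact Finset.sum_congr rfl fun k _ => by ring
    rw [hc1, hc2]
    have hC := identC (m + 1)
    push_cast at hC ⊢
    linear_combination (-12 : ℚ) * hC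



noncomputable def Fser : PowerSeries ℚ :=
  PowerSeries.C (R := ℚ) (1 / 1728) * (EisensteinE4 ^ 3 - EisensteinE6 ^ 2)

lemma Fode : X * d⁄dX ℚ Fser = E2 * Fser := by
  have o4 : (3 : ℚ⟦X⟧) * (X * d⁄dX ℚ EisensteinE4) = E2 * EisensteinE4 - EisensteinE6 := by
    have h := E4ode
    rw [smul_eq_C_mul] at h
    rwa [show ((C (R := ℚ)) (3:ℚ)) = (3 : ℚ⟦X⟧) from map_ofNat _ 3] at h
  have o6 : (2 : ℚ⟦X⟧) * (X * d⁄dX ℚ EisensteinE6) = E2 * EisensteinE6 - EisensteinE4 ^ 2 := by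
    have h := E6ode
    rw [smul_eq_C_mul] at h
    rwa [show ((C (R := ℚ)) (2:ℚ)) = (2 : ℚ⟦X⟧) from map_ofNat _ 2] at h
  have h3 : d⁄dX ℚ (EisensteinE4 ^ 3) = 3 * (EisensteinE4 ^ 2 * d⁄dX ℚ EisensteinE4) := by
    rw [Derivation.leibniz_pow]
    simp only [smul_eq_mul, nsmul_eq_mul]
    push_cast
    ring
  have h2 : d⁄dX ℚ (EisensteinE6 ^ 2) = 2 * (EisensteinE6 * d⁄dX ℚ EisensteinE6) := by
    rw [Derivation.leibniz_pow]
    simp only [smul_eq_mul, nsmul_eq_mul, pow_one]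
    push_cast
    ring
  rw [Fser, smul_eq_C_mul (EisensteinE4 ^ 3 - EisensteinE6 ^ 2) (1/1728 : ℚ) |>.symm]
  rw [Derivation.map_smul, smul_eq_C_mul, smul_eq_C_mul, map_sub]
  linear_combination (C (R := ℚ) (1/1728 : ℚ)) * X * h3 - (C (R := ℚ) (1/1728 : ℚ)) * X * h2
    + (C (R := ℚ) (1/1728 : ℚ)) * EisensteinE4 ^ 2 * o4 - (C (R := ℚ) (1/1728 : ℚ)) * EisensteinE6 * o6


/-- the series ∑_{k≥1} X^{mk} -/
noncomputable def T (m : ℕ) : PowerSeries ℚ :=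
  PowerSeries.mk fun j => if m ∣ j ∧ j ≠ 0 then 1 else 0

lemma T_eq (m : ℕ) (hm : m ≠ 0) : (1 - (X:ℚ⟦X⟧)^m) * T m = X^m := by
  ext j
  rw [sub_mul, one_mul, map_sub, coeff_X_pow_mul', coeff_X_pow]
  simp only [T, coeff_mk]
  by_cases hj : m ≤ j
  · have hiff : m ∣ j ↔ m ∣ j - m :=
      ⟨fun h => Nat.dvd_sub h dvd_rfl,
       fun h => by
        have h2 := Nat.dvd_add h (dvd_refl m)
        rwa [Nat.sub_add_cancel hj] at h2⟩
    rw [if_pos hj]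
    by_cases hd : m ∣ j
    · by_cases hjm : j = m
      · subst hjm
        rw [if_pos ⟨hd, by omega⟩, if_neg (by omega), if_pos rfl]
        ring
      · rw [if_pos ⟨hd, by omega⟩, if_pos ⟨hiff.mp hd, by omega⟩, if_neg hjm]
        ring
    · rw [if_neg (fun hc => hd hc.1), if_neg (fun hc => hd (hiff.mpr hc.1)),
        if_neg (fun hc : j = m => hd (hc ▸ dvd_rfl))]
      ring
  · rw [if_neg hj]
    have hjm : j ≠ m := by omega
    rw [if_neg ?_, if_neg hjm]
    · ring
    · rintro ⟨hd, hj0⟩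
      exact hj (Nat.le_of_dvd (by omega) hd)

lemma const_one_sub_X_pow (m : ℕ) (hm : m ≠ 0) :
    constantCoeff (R := ℚ) (1 - (X:ℚ⟦X⟧)^m) ≠ 0 := by
  rw [map_sub, map_one, map_pow, constantCoeff_X, zero_pow hm]
  norm_num

lemma X_mul_inv_eq_T (m : ℕ) (hm : m ≠ 0) :
    (X:ℚ⟦X⟧)^m * (1 - (X:ℚ⟦X⟧)^m)⁻¹ = T m := by
  have h1 : (1 - (X:ℚ⟦X⟧)^m)⁻¹ * (1 - (X:ℚ⟦X⟧)^m) = 1 :=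
    PowerSeries.inv_mul_cancel _ (const_one_sub_X_pow m hm)
  linear_combination (T m) * h1 - (1 - (X:ℚ⟦X⟧)^m)⁻¹ * (T_eq m hm)

lemma prod_one_sub_dvd (n : ℕ) (s : Finset ℕ) (hs : ∀ m ∈ s, n + 1 ≤ m) :
    (X:ℚ⟦X⟧)^(n+1) ∣ (∏ m ∈ s, (1 - X^m)^24) - 1 := by
  classical
  induction s using Finset.induction_on with
  | empty => simp
  | insert a s' ha ih =>
    rw [Finset.prod_insert ha]
    have h1 := ih (fun m hm => hs m (Finset.mem_insert_of_mem hm))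
    have h2 : (X:ℚ⟦X⟧)^(n+1) ∣ (1 - X^a)^24 - 1 := by
      have hsub := sub_dvd_pow_sub_pow (1 - (X:ℚ⟦X⟧)^a) 1 24
      rw [one_pow] at hsub
      have hneg : ((1 : ℚ⟦X⟧) - X^a) - 1 = -(X^a) := by ring
      rw [hneg] at hsub
      have hXa : (X:ℚ⟦X⟧)^a ∣ (1 - X^a)^24 - 1 := (neg_dvd).mp hsub
      exact dvd_trans (pow_dvd_pow X (hs a (Finset.mem_insert_self a s'))) hXa
    have e : (1 - (X:ℚ⟦X⟧)^a)^24 * (∏ m ∈ s', (1 - X^m)^24) - 1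
        = (1 - X^a)^24 * ((∏ m ∈ s', (1 - X^m)^24) - 1) + ((1 - X^a)^24 - 1) := by
      ring
    rw [e]
    exact dvd_add (Dvd.dvd.mul_left h1 _) h2

noncomputable def Dser : PowerSeries ℚ :=
  PowerSeries.mk fun n => coeff (R := ℚ) n (X * ∏ m ∈ Finset.Icc 1 n, (1 - X^m)^24)

lemma stable (n N : ℕ) (h : n ≤ N) :
    coeff (R := ℚ) n (X * ∏ m ∈ Finset.Icc 1 N, (1 - (X:ℚ⟦X⟧)^m)^24) = coeff (R := ℚ) n Dser := by
  rw [Dser, coeff_mk]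
  have hIcc : ∀ k : ℕ, Finset.Icc 1 k = Finset.Ioc 0 k := fun k => by
    rw [← Finset.Icc_add_one_left_eq_Ioc]; rfl
  have hsplit : (∏ m ∈ Finset.Icc 1 N, (1 - (X:ℚ⟦X⟧)^m)^24)
      = (∏ m ∈ Finset.Icc 1 n, (1 - X^m)^24) * ∏ m ∈ Finset.Ioc n N, (1 - X^m)^24 := by
    rw [hIcc N, hIcc n, Finset.prod_Ioc_consecutive _ (Nat.zero_le n) h]
  obtain ⟨B, hB⟩ := prod_one_sub_dvd n (Finset.Ioc n N) (fun m hm => by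
    simp only [Finset.mem_Ioc] at hm; omega)
  have hP : (∏ m ∈ Finset.Ioc n N, (1 - (X:ℚ⟦X⟧)^m)^24) = 1 + X^(n+1) * B := by
    linear_combination hB
  rw [hsplit, hP]
  have e : X * ((∏ m ∈ Finset.Icc 1 n, (1 - (X:ℚ⟦X⟧)^m)^24) * (1 + X^(n+1) * B))
      = X * (∏ m ∈ Finset.Icc 1 n, (1 - X^m)^24)
        + X^(n+1) * (X * (∏ m ∈ Finset.Icc 1 n, (1 - X^m)^24) * B) := by
    ring
  rw [e, map_add]
  have hz : coeff (R := ℚ) n ((X:ℚ⟦X⟧)^(n+1) * (X * (∏ m ∈ Finset.Icc 1 n, (1 - X^m)^24) * B)) = 0 :=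
    X_pow_dvd_iff.mp (dvd_mul_right _ _) n (Nat.lt_succ_self n)
  rw [hz, add_zero]

lemma prod_ode (s : Finset ℕ) (hs : ∀ m ∈ s, 1 ≤ m) :
    X * d⁄dX ℚ (X * ∏ m ∈ s, (1 - X^m)^24)
      = (1 - 24 * ∑ m ∈ s, (C (R := ℚ) (m:ℚ)) * (X^m * (1 - X^m)⁻¹))
        * (X * ∏ m ∈ s, (1 - X^m)^24) := by
  classical
  induction s using Finset.induction_on with
  | empty => simp
  | insert a s' ha ih =>
    specialize ih (fun m hm => hs m (Finset.mem_insert_of_mem hm))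
    have ha1 : 1 ≤ a := hs a (Finset.mem_insert_self a s')
    obtain ⟨b, rfl⟩ : ∃ b, a = b + 1 := ⟨a - 1, by omega⟩
    rw [Finset.prod_insert ha, Finset.sum_insert ha]
    have hinv : (1 - (X:ℚ⟦X⟧)^(b+1))⁻¹ * (1 - (X:ℚ⟦X⟧)^(b+1)) = 1 :=
      PowerSeries.inv_mul_cancel _ (const_one_sub_X_pow _ (Nat.succ_ne_zero b))
    have hD1 : d⁄dX ℚ (1 - (X:ℚ⟦X⟧)^(b+1)) = -(((b:ℚ⟦X⟧) + 1) * X^b) := by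
      rw [map_sub, Derivation.map_one_eq_zero, Derivation.leibniz_pow, derivative_X,
        Nat.add_sub_cancel]
      simp only [smul_eq_mul, nsmul_eq_mul, mul_one]
      push_cast
      ring
    have hDf : d⁄dX ℚ ((1 - (X:ℚ⟦X⟧)^(b+1))^24)
        = 24 * (1 - X^(b+1))^23 * (-((b:ℚ⟦X⟧) + 1) * X^b) := by
      rw [Derivation.leibniz_pow, hD1]
      simp only [smul_eq_mul, nsmul_eq_mul]
      push_cast
      ring
    have e : X * (1 - (X:ℚ⟦X⟧)^(b+1))^24 * ∏ m ∈ s', (1 - X^m)^24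
        = (1 - X^(b+1))^24 * (X * ∏ m ∈ s', (1 - X^m)^24) := by ring
    rw [show X * ((1 - (X:ℚ⟦X⟧)^(b+1))^24 * ∏ m ∈ s', (1 - X^m)^24)
        = (1 - X^(b+1))^24 * (X * ∏ m ∈ s', (1 - X^m)^24) from by ring]
    rw [Derivation.leibniz, smul_eq_mul, smul_eq_mul, hDf]
    rw [map_natCast (C (R := ℚ)) (b+1)]
    push_cast
    linear_combination ((1 - (X:ℚ⟦X⟧)^(b+1))^24) * ih
      + 24 * ((b:ℚ⟦X⟧)+1) * X^(b+1) * (X * ∏ m ∈ s', (1 - X^m)^24)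
        * (1 - X^(b+1))^23 * hinv


lemma coeff_E2approx (N j : ℕ) (hjN : j ≤ N) :
    coeff (R := ℚ) j (1 - 24 * ∑ m ∈ Finset.Icc 1 N, (C (R := ℚ) (m:ℚ)) * ((X:ℚ⟦X⟧)^m * (1 - X^m)⁻¹))
      = coeff (R := ℚ) j E2 := by
  have hT : ∑ m ∈ Finset.Icc 1 N, (C (R := ℚ) (m:ℚ)) * ((X:ℚ⟦X⟧)^m * (1 - X^m)⁻¹)
      = ∑ m ∈ Finset.Icc 1 N, (C (R := ℚ) (m:ℚ)) * T m := by
    refine Finset.sum_congr rfl fun m hm => ?_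
    rw [X_mul_inv_eq_T m (by simp only [Finset.mem_Icc] at hm; omega)]
  rw [hT, map_sub, show (24 : ℚ⟦X⟧) = C (R := ℚ) (24:ℚ) from (map_ofNat _ _).symm, coeff_C_mul,
    map_sum]
  have hterm : ∀ m ∈ Finset.Icc 1 N, coeff (R := ℚ) j ((C (R := ℚ) (m:ℚ)) * T m)
      = (if m ∣ j ∧ j ≠ 0 then (m:ℚ) else 0) := by
    intro m hm
    rw [coeff_C_mul, T, coeff_mk]
    split_ifs <;> ring
  rw [Finset.sum_congr rfl hterm]
  by_cases hj : j = 0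
  · subst hj
    rw [coeff_E2_zero]
    have : ∀ m ∈ Finset.Icc 1 N, (if m ∣ 0 ∧ (0:ℕ) ≠ 0 then (m:ℚ) else 0) = 0 := by
      intro m _; simp
    rw [Finset.sum_congr rfl this]
    simp
  · rw [coeff_E2 j hj]
    have h1 : ∀ m ∈ Finset.Icc 1 N, (if m ∣ j ∧ j ≠ 0 then (m:ℚ) else 0)
        = (if m ∣ j then (m:ℚ) else 0) := by
      intro m _
      split_ifs with h h2 h3 <;> tauto
    rw [Finset.sum_congr rfl h1, ← Finset.sum_filter]
    have hfil : (Finset.Icc 1 N).filter (· ∣ j) = j.divisors := by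
      ext m
      simp only [Finset.mem_filter, Finset.mem_Icc, Nat.mem_divisors]
      constructor
      · rintro ⟨⟨h1, h2⟩, h3⟩; exact ⟨h3, hj⟩
      · rintro ⟨hd, -⟩
        have hm1 : 1 ≤ m := Nat.pos_of_dvd_of_pos hd (Nat.pos_of_ne_zero hj)
        have hm2 : m ≤ j := Nat.le_of_dvd (Nat.pos_of_ne_zero hj) hd
        exact ⟨⟨hm1, by omega⟩, hd⟩
    rw [hfil]
    have : ∑ m ∈ j.divisors, (m:ℚ) = sg 1 j := by
      rw [sg]
      exact Finset.sum_congr rfl fun d _ => (pow_one _).symm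
    rw [coeff_one, if_neg hj, this]
    ring

lemma Dode : X * d⁄dX ℚ Dser = E2 * Dser := by
  ext n
  rw [coeff_X_mul_dX]
  have h1 : coeff (R := ℚ) n Dser
      = coeff (R := ℚ) n (X * ∏ m ∈ Finset.Icc 1 n, (1 - (X:ℚ⟦X⟧)^m)^24) := coeff_mk n _
  have h2 := congrArg (coeff (R := ℚ) n) (prod_ode (Finset.Icc 1 n)
    (fun m hm => (Finset.mem_Icc.mp hm).1))
  rw [coeff_X_mul_dX] at h2
  have h3 : coeff (R := ℚ) n ((1 - 24 * ∑ m ∈ Finset.Icc 1 n, (C (R := ℚ) (m:ℚ)) * ((X:ℚ⟦X⟧)^m * (1 - X^m)⁻¹))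
      * (X * ∏ m ∈ Finset.Icc 1 n, (1 - X^m)^24)) = coeff (R := ℚ) n (E2 * Dser) := by
    rw [coeff_mul, coeff_mul]
    refine Finset.sum_congr rfl fun p hp => ?_
    rw [Finset.HasAntidiagonal.mem_antidiagonal] at hp
    rw [coeff_E2approx n p.1 (by omega), stable p.2 n (by omega)]
  rw [h1, h2, h3]

lemma ode_unique (f g : ℚ⟦X⟧) (hf : X * d⁄dX ℚ f = E2 * f) (hg : X * d⁄dX ℚ g = E2 * g)
    (h1 : coeff (R := ℚ) 1 f = coeff (R := ℚ) 1 g) : f = g := by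
  have hcf : ∀ h : ℚ⟦X⟧, X * d⁄dX ℚ h = E2 * h → coeff (R := ℚ) 0 h = 0 := by
    intro h hh
    have h0 := congrArg (coeff (R := ℚ) 0) hh
    rw [coeff_X_mul_dX, coeff_mul] at h0
    simp only [Finset.Nat.antidiagonal_zero, Finset.sum_singleton, coeff_E2_zero, one_mul] at h0
    push_cast at h0
    linarith
  ext n
  induction n using Nat.strong_induction_on with
  | _ n ih =>
    match n, ih with
    | 0, _ => rw [hcf f hf, hcf g hg]
    | 1, _ => exact h1
    | (k+2), ih =>
      have Hf := congrArg (coeff (R := ℚ) (k+2)) hf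
      have Hg := congrArg (coeff (R := ℚ) (k+2)) hg
      rw [coeff_X_mul_dX, coeff_mul,
        Finset.Nat.sum_antidiagonal_eq_sum_range_succ
          (fun i j => coeff (R := ℚ) i E2 * coeff (R := ℚ) j f) (k+2),
        Finset.sum_range_succ'] at Hf
      rw [coeff_X_mul_dX, coeff_mul,
        Finset.Nat.sum_antidiagonal_eq_sum_range_succ
          (fun i j => coeff (R := ℚ) i E2 * coeff (R := ℚ) j g) (k+2),
        Finset.sum_range_succ'] at Hg
      have hsum : ∑ i ∈ Finset.range (k+2), coeff (R := ℚ) (i+1) E2 * coeff (R := ℚ) (k+2-(i+1)) f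
          = ∑ i ∈ Finset.range (k+2), coeff (R := ℚ) (i+1) E2 * coeff (R := ℚ) (k+2-(i+1)) g := by
        refine Finset.sum_congr rfl fun i hi => ?_
        rw [ih (k+2-(i+1)) (by omega)]
      rw [hsum] at Hf
      simp only [Nat.sub_zero, coeff_E2_zero, one_mul] at Hf Hg
      have key : (((k+2:ℕ):ℚ) - 1) * (coeff (R := ℚ) (k+2) f - coeff (R := ℚ) (k+2) g) = 0 := by
        linear_combination Hf - Hg
      rcases mul_eq_zero.mp key with h | h
      · exfalso
        push_cast at h
        have hk0 : (0:ℚ) ≤ (k:ℚ) := Nat.cast_nonneg k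
        linarith
      · linarith

lemma coeff_zero_mul' (f g : ℚ⟦X⟧) : coeff (R := ℚ) 0 (f * g) = coeff (R := ℚ) 0 f * coeff (R := ℚ) 0 g := by
  rw [coeff_mul]
  simp

lemma coeff_one_mul' (f g : ℚ⟦X⟧) :
    coeff (R := ℚ) 1 (f * g) = coeff (R := ℚ) 0 f * coeff (R := ℚ) 1 g + coeff (R := ℚ) 1 f * coeff (R := ℚ) 0 g := by
  rw [coeff_mul, Finset.Nat.sum_antidiagonal_eq_sum_range_succ
    (fun i j => coeff (R := ℚ) i f * coeff (R := ℚ) j g) 1]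
  simp [Finset.sum_range_succ]

lemma sg_at_one (r : ℕ) : sg r 1 = 1 := by simp [sg]

lemma coeff1F : coeff (R := ℚ) 1 Fser = 1 := by
  rw [Fser, coeff_C_mul, map_sub]
  have h40 : coeff (R := ℚ) 0 EisensteinE4 = 1 := coeff_E4_zero
  have h41 : coeff (R := ℚ) 1 EisensteinE4 = 240 := by rw [coeff_E4 1 one_ne_zero, sg_at_one]; norm_num
  have h60 : coeff (R := ℚ) 0 EisensteinE6 = 1 := coeff_E6_zero
  have h61 : coeff (R := ℚ) 1 EisensteinE6 = -504 := by rw [coeff_E6 1 one_ne_zero, sg_at_one]; norm_num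
  have h4 : coeff (R := ℚ) 1 (EisensteinE4 ^ 3) = 720 := by
    rw [pow_succ, pow_succ, pow_one, coeff_one_mul', coeff_one_mul', coeff_zero_mul',
      h40, h41]
    norm_num
  have h6 : coeff (R := ℚ) 1 (EisensteinE6 ^ 2) = -1008 := by
    rw [pow_two, coeff_one_mul', h60, h61]
    norm_num
  rw [h4, h6]
  norm_num

lemma coeff1D : coeff (R := ℚ) 1 Dser = 1 := by
  rw [Dser, coeff_mk]
  rw [show ((1:ℕ)) = 0 + 1 from rfl, coeff_succ_X_mul, coeff_zero_eq_constantCoeff, map_prod]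
  have : ∀ m ∈ Finset.Icc 1 1, constantCoeff (R := ℚ) ((1 - (X:ℚ⟦X⟧)^m)^24) = 1 := by
    intro m hm
    simp only [Finset.mem_Icc] at hm
    rw [map_pow, map_sub, map_one, map_pow, constantCoeff_X, zero_pow (by omega)]
    norm_num
  rw [Finset.prod_congr rfl this]
  simp

lemma Dser_eq_Fser : Dser = Fser := ode_unique Dser Fser Dode Fode (by rw [coeff1D, coeff1F])


end DeltaAux

/-- The q-expansion identity `Δ = (E₄³ − E₆²)/1728`, stated coefficientwise
(the `n`-th coefficient of `q·∏_{m≥1}(1−q^m)^{24}` only depends on the factors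
with `m ≤ n`, so the infinite product is truncated at `n`). -/
theorem delta_eq_eisenstein (n : ℕ) :
    PowerSeries.coeff (R := ℚ) n
        (PowerSeries.X * ∏ m ∈ Finset.Icc 1 n, (1 - PowerSeries.X ^ m) ^ 24) =
      PowerSeries.coeff (R := ℚ) n
        (PowerSeries.C (R := ℚ) (1 / 1728) * (EisensteinE4 ^ 3 - EisensteinE6 ^ 2)) := by
  have h1 : PowerSeries.coeff (R := ℚ) n DeltaAux.Dser
      = PowerSeries.coeff (R := ℚ) n
        (PowerSeries.X * ∏ m ∈ Finset.Icc 1 n, (1 - PowerSeries.X ^ m) ^ 24) :=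
    PowerSeries.coeff_mk n
      (fun k => PowerSeries.coeff (R := ℚ) k
        (PowerSeries.X * ∏ m ∈ Finset.Icc 1 k, (1 - PowerSeries.X ^ m) ^ 24))
  rw [← h1, DeltaAux.Dser_eq_Fser]
  rfl
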